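/- Generalized coarea formula: for any locally integrable u on ℝⁿ, an open set Ω and r > 0, one has ∫_Ω osc_{B_r(x)} u dx = ∫_{−∞}^{+∞} L^n(((∂{u > s}) ⊕ B_r) ∩ Ω) ds, where L^n is Lebesgue measure. -/

import Mathlib

open MeasureTheory Metric Set Filter
open scoped ENNReal Topology

/-- Convert an extended real to an extended nonnegative real. -/
noncomputable def erealToENNReal (x : EReal) : ℝ≥0∞ :=
  if x = ⊤ then ⊤ else ENNReal.ofReal x.toReal

/-- Essential oscillation of `u` on a set `s` (possibly `+∞`). -/
noncomputable def osc {n : ℕ} (u : EuclideanSpace ℝ (Fin n) → ℝ)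
    (s : Set (EuclideanSpace ℝ (Fin n))) : ℝ≥0∞ :=
  erealToENNReal ((essSup (fun x => (u x : EReal)) (volume.restrict s)) -
    (essInf (fun x => (u x : EReal)) (volume.restrict s)))

/-- Points of density one of a measurable set. -/
def densityOne {n : ℕ} (E : Set (EuclideanSpace ℝ (Fin n))) : Set (EuclideanSpace ℝ (Fin n)) :=
  {x | Tendsto (fun ρ => volume (E ∩ ball x ρ) / volume (ball x ρ))
    (nhdsWithin 0 (Ioi 0)) (nhds 1)}

/-- Minkowski dilation `A ⊕ B_r`. -/
def dilate {n : ℕ} (A : Set (EuclideanSpace ℝ (Fin n))) (r : ℝ) :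
    Set (EuclideanSpace ℝ (Fin n)) :=
  ⋃ x ∈ A, ball x r

section Aux

variable {n : ℕ}

local notation "Euc" => EuclideanSpace ℝ (Fin n)

/-- essential sup of `u` over `ball x r`. -/
noncomputable def Msup (u : Euc → ℝ) (r : ℝ) (x : Euc) : EReal :=
  essSup (fun y => (u y : EReal)) (volume.restrict (ball x r))

/-- essential inf of `u` over `ball x r`. -/
noncomputable def mInf (u : Euc → ℝ) (r : ℝ) (x : Euc) : EReal :=
  essInf (fun y => (u y : EReal)) (volume.restrict (ball x r))

lemma osc_eq (u : Euc → ℝ) (r : ℝ) (x : Euc) :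
    osc u (ball x r) = erealToENNReal (Msup u r x - mInf u r x) := rfl

lemma vol_closedBall_eq (x : Euc) {ρ : ℝ} (hρ : 0 < ρ) :
    volume (closedBall x ρ) = volume (ball x ρ) := by
  have h : volume (sphere x ρ) = 0 := Measure.addHaar_sphere_of_ne_zero volume x hρ.ne'
  rw [← ball_union_sphere]
  exact le_antisymm ((measure_union_le _ _).trans (by rw [h, add_zero]))
    (measure_mono subset_union_left)

lemma vol_inter_closedBall_eq (S : Set Euc) (x : Euc) {ρ : ℝ} (hρ : 0 < ρ) :
    volume (S ∩ closedBall x ρ) = volume (S ∩ ball x ρ) := by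
  have h : volume (sphere x ρ) = 0 := Measure.addHaar_sphere_of_ne_zero volume x hρ.ne'
  refine le_antisymm ?_ (measure_mono (inter_subset_inter_right _ ball_subset_closedBall))
  calc volume (S ∩ closedBall x ρ) ≤ volume ((S ∩ ball x ρ) ∪ sphere x ρ) := by
        refine measure_mono ?_
        rw [← ball_union_sphere]
        rintro y ⟨hyS, hy⟩
        rcases hy with hy | hy
        · exact Or.inl ⟨hyS, hy⟩
        · exact Or.inr hy
    _ ≤ volume (S ∩ ball x ρ) + volume (sphere x ρ) := measure_union_le _ _
    _ = volume (S ∩ ball x ρ) := by rw [h, add_zero]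

/-- Lebesgue density theorem, stated with open balls. -/
lemma density_ae {S : Set Euc} (hS : MeasurableSet S) :
    ∀ᵐ x : Euc, Tendsto (fun ρ => volume (S ∩ ball x ρ) / volume (ball x ρ)) (𝓝[>] 0)
      (𝓝 (S.indicator 1 x)) := by
  filter_upwards [Besicovitch.ae_tendsto_measure_inter_div_of_measurableSet volume hS] with x hx
  refine hx.congr' ?_
  filter_upwards [self_mem_nhdsWithin] with ρ (hρ : (0:ℝ) < ρ)
  rw [vol_closedBall_eq x hρ, vol_inter_closedBall_eq S x hρ]

/-- A connected set meeting a set and its complement meets the frontier. -/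
lemma preconn_inter_frontier {α : Type*} [TopologicalSpace α] {B t : Set α}
    (hB : IsPreconnected B) (h1 : (B ∩ t).Nonempty) (h2 : (B \ t).Nonempty) :
    (B ∩ frontier t).Nonempty := by
  by_contra hfr
  rw [not_nonempty_iff_eq_empty] at hfr
  have hdis : ∀ z ∈ B, z ∉ frontier t := fun z hz hzf =>
    (eq_empty_iff_forall_notMem.1 hfr z) ⟨hz, hzf⟩
  have key := hB (interior t) (closure t)ᶜ isOpen_interior isClosed_closure.isOpen_compl ?_ ?_ ?_
  · obtain ⟨z, _, hz1, hz2⟩ := key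
    exact hz2 (interior_subset_closure hz1)
  · intro z hz
    by_cases hzc : z ∈ closure t
    · have : z ∈ interior t := by
        rcases (em (z ∈ interior t)) with h | h
        · exact h
        · exact absurd ⟨hzc, h⟩ (hdis z hz)
      exact Or.inl this
    · exact Or.inr hzc
  · obtain ⟨p, hpB, hpt⟩ := h1
    refine ⟨p, hpB, ?_⟩
    rcases (em (p ∈ interior t)) with h | h
    · exact h
    · exact absurd ⟨subset_closure hpt, h⟩ (hdis p hpB)
  · obtain ⟨q, hqB, hqt⟩ := h2
    refine ⟨q, hqB, fun hqc => ?_⟩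
    exact hdis q hqB ⟨hqc, fun hint => hqt (interior_subset hint)⟩

lemma mem_dilate_iff {A : Set Euc} {r : ℝ} {x : Euc} :
    x ∈ dilate A r ↔ ∃ y ∈ A, y ∈ ball x r := by
  simp only [dilate, mem_iUnion, mem_ball, exists_prop]
  exact ⟨fun ⟨y, hy, h⟩ => ⟨y, hy, by rwa [dist_comm]⟩, fun ⟨y, hy, h⟩ => ⟨y, hy, by rwa [dist_comm]⟩⟩


lemma lt_Msup_iff {u : Euc → ℝ} {r : ℝ} {x : Euc} {c : EReal} :
    c < Msup u r x ↔ volume ({y | c < (u y : EReal)} ∩ ball x r) ≠ 0 := by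
  constructor
  · intro h h0
    have hae : ∀ᵐ y ∂(volume.restrict (ball x r)), (u y : EReal) ≤ c := by
      rw [ae_iff]
      simp only [not_le]
      rwa [Measure.restrict_apply' measurableSet_ball]
    exact absurd (essSup_le_of_ae_le (μ := volume.restrict (ball x r)) c hae) h.not_ge
  · intro hne
    by_contra hc
    push_neg at hc
    have hae : ∀ᵐ y ∂(volume.restrict (ball x r)), (u y : EReal) ≤ c :=
      (ae_le_essSup (μ := volume.restrict (ball x r)) (f := fun y => (u y : EReal))).mono
        fun y hy => hy.trans hc
    rw [ae_iff] at hae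
    simp only [not_le] at hae
    rw [Measure.restrict_apply' measurableSet_ball] at hae
    exact hne hae

lemma mInf_lt_iff {u : Euc → ℝ} {r : ℝ} {x : Euc} {c : EReal} :
    mInf u r x < c ↔ volume ({y | (u y : EReal) < c} ∩ ball x r) ≠ 0 := by
  constructor
  · intro h h0
    have hae : ∀ᵐ y ∂(volume.restrict (ball x r)), c ≤ (u y : EReal) := by
      rw [ae_iff]
      simp only [not_le]
      rwa [Measure.restrict_apply' measurableSet_ball]
    exact absurd (le_essInf_of_ae_le (μ := volume.restrict (ball x r)) c hae) h.not_ge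
  · intro hne
    by_contra hc
    push_neg at hc
    have hae : ∀ᵐ y ∂(volume.restrict (ball x r)), c ≤ (u y : EReal) :=
      (ae_essInf_le (μ := volume.restrict (ball x r)) (f := fun y => (u y : EReal))).mono
        fun y hy => hc.trans hy
    rw [ae_iff] at hae
    simp only [not_le] at hae
    rw [Measure.restrict_apply' measurableSet_ball] at hae
    exact hne hae

lemma mInf_le_Msup (u : Euc → ℝ) {r : ℝ} (hr : 0 < r) (x : Euc) : mInf u r x ≤ Msup u r x := by
  have hne : volume.restrict (ball x r) ≠ 0 := by
    rw [Ne, Measure.restrict_eq_zero]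
    exact (measure_ball_pos volume x hr).ne'
  haveI : (ae (volume.restrict (ball x r))).NeBot := ae_neBot.2 hne
  obtain ⟨y, h1, h2⟩ := ((ae_essInf_le (μ := volume.restrict (ball x r))
    (f := fun y => (u y : EReal))).and (ae_le_essSup (μ := volume.restrict (ball x r))
    (f := fun y => (u y : EReal)))).exists
  exact h1.trans h2

lemma lsc_Msup (u : Euc → ℝ) {r : ℝ} (hr : 0 < r) : LowerSemicontinuous (Msup u r) := by
  intro x c hc
  rw [gt_iff_lt, lt_Msup_iff] at hc
  set A := {y : Euc | c < (u y : EReal)} with hA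
  have hU : A ∩ ball x r = ⋃ k : ℕ, A ∩ ball x (r - 1 / (k + 1)) := by
    ext y
    simp only [mem_iUnion, mem_inter_iff, mem_ball]
    constructor
    · rintro ⟨hAy, hy⟩
      obtain ⟨k, hk⟩ := exists_nat_one_div_lt (sub_pos.2 hy)
      exact ⟨k, hAy, by push_cast at hk ⊢; linarith⟩
    · rintro ⟨k, hAy, hy⟩
      have h0 : (0:ℝ) ≤ 1 / ((k:ℝ) + 1) := by positivity
      exact ⟨hAy, by linarith⟩
  have hex : ∃ k : ℕ, volume (A ∩ ball x (r - 1 / (k + 1))) ≠ 0 := by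
    by_contra h
    push_neg at h
    exact hc (by rw [hU]; exact measure_iUnion_null h)
  obtain ⟨k, hk⟩ := hex
  have hδ : (0:ℝ) < 1 / ((k:ℝ) + 1) := by positivity
  filter_upwards [ball_mem_nhds x hδ] with x' hx'
  refine lt_Msup_iff.2 ?_
  intro h0
  apply hk
  refine measure_mono_null ?_ h0
  rintro y ⟨hAy, hy⟩
  refine ⟨hAy, ?_⟩
  rw [mem_ball] at hx' hy ⊢
  calc dist y x' ≤ dist y x + dist x x' := dist_triangle y x x'
    _ = dist y x + dist x' x := by rw [dist_comm x x']
    _ < (r - 1 / ((k:ℝ) + 1)) + 1 / ((k:ℝ) + 1) := by push_cast at hy; exact add_lt_add hy hx'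
    _ = r := by ring

lemma usc_mInf (u : Euc → ℝ) {r : ℝ} (hr : 0 < r) : UpperSemicontinuous (mInf u r) := by
  intro x c hc
  rw [mInf_lt_iff] at hc
  set A := {y : Euc | (u y : EReal) < c} with hA
  have hU : A ∩ ball x r = ⋃ k : ℕ, A ∩ ball x (r - 1 / (k + 1)) := by
    ext y
    simp only [mem_iUnion, mem_inter_iff, mem_ball]
    constructor
    · rintro ⟨hAy, hy⟩
      obtain ⟨k, hk⟩ := exists_nat_one_div_lt (sub_pos.2 hy)
      exact ⟨k, hAy, by push_cast at hk ⊢; linarith⟩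
    · rintro ⟨k, hAy, hy⟩
      have h0 : (0:ℝ) ≤ 1 / ((k:ℝ) + 1) := by positivity
      exact ⟨hAy, by linarith⟩
  have hex : ∃ k : ℕ, volume (A ∩ ball x (r - 1 / (k + 1))) ≠ 0 := by
    by_contra h
    push_neg at h
    exact hc (by rw [hU]; exact measure_iUnion_null h)
  obtain ⟨k, hk⟩ := hex
  have hδ : (0:ℝ) < 1 / ((k:ℝ) + 1) := by positivity
  filter_upwards [ball_mem_nhds x hδ] with x' hx'
  rw [mInf_lt_iff]
  intro h0
  apply hk
  refine measure_mono_null ?_ h0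
  rintro y ⟨hAy, hy⟩
  refine ⟨hAy, ?_⟩
  rw [mem_ball] at hx' hy ⊢
  calc dist y x' ≤ dist y x + dist x x' := dist_triangle y x x'
    _ = dist y x + dist x' x := by rw [dist_comm x x']
    _ < (r - 1 / ((k:ℝ) + 1)) + 1 / ((k:ℝ) + 1) := by push_cast at hy; exact add_lt_add hy hx'
    _ = r := by ring


/-- If the superlevel and sublevel sets both have positive measure in the ball, the ball meets the
frontier of the density-one set, so `x` is in the dilation. -/
lemma mem_dilate_of_pos {u : Euc → ℝ} (hu : Measurable u) {r : ℝ} (hr : 0 < r) {x : Euc} {s : ℝ}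
    (h1 : volume ({y | (s : EReal) < (u y : EReal)} ∩ ball x r) ≠ 0)
    (h2 : volume ({y | (u y : EReal) < (s : EReal)} ∩ ball x r) ≠ 0) :
    x ∈ dilate (frontier (densityOne {y | u y > s})) r := by
  set Es : Set Euc := {y | u y > s} with hEs
  have hEseq : {y : Euc | (s : EReal) < (u y : EReal)} = Es := by
    ext y; simp [EReal.coe_lt_coe_iff, hEs, gt_iff_lt]
  have hmeas : MeasurableSet Es := measurableSet_lt measurable_const hu
  have hae := density_ae (n := n) hmeas
  -- the full measure set of good points
  set T : Set Euc := {x | Tendsto (fun ρ => volume (Es ∩ ball x ρ) / volume (ball x ρ))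
    (𝓝[>] 0) (𝓝 (Es.indicator 1 x))} with hT
  have hTnull : volume Tᶜ = 0 := by
    rw [ae_iff] at hae
    exact hae
  -- find a density-one point in the ball
  rw [hEseq] at h1
  have hp : ∃ p, p ∈ ball x r ∩ densityOne Es := by
    have hpos : volume (Es ∩ ball x r ∩ T) ≠ 0 := by
      intro h0
      apply h1
      have : Es ∩ ball x r ⊆ (Es ∩ ball x r ∩ T) ∪ Tᶜ := by
        intro y hy
        by_cases hyT : y ∈ T
        · exact Or.inl ⟨hy, hyT⟩
        · exact Or.inr hyT
      exact measure_mono_null this (by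
        refine le_antisymm ?_ zero_le
        calc volume ((Es ∩ ball x r ∩ T) ∪ Tᶜ) ≤ volume (Es ∩ ball x r ∩ T) + volume Tᶜ :=
              measure_union_le _ _
          _ = 0 := by rw [h0, hTnull, add_zero])
    obtain ⟨p, hp⟩ := nonempty_of_measure_ne_zero hpos
    refine ⟨p, hp.1.2, ?_⟩
    have := hp.2
    rw [hT, mem_setOf_eq, indicator_of_mem hp.1.1] at this
    exact this
  -- find a point in the ball which is not a density-one point
  have h2' : volume (Esᶜ ∩ ball x r) ≠ 0 := by
    intro h0
    apply h2
    refine measure_mono_null ?_ h0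
    rintro y ⟨hy1, hy2⟩
    refine ⟨fun hyE => ?_, hy2⟩
    have hy1' : u y < s := by exact_mod_cast hy1
    exact absurd (hy1'.trans hyE) (lt_irrefl _)
  have hq : ∃ q, q ∈ ball x r ∧ q ∉ densityOne Es := by
    have hpos : volume (Esᶜ ∩ ball x r ∩ T) ≠ 0 := by
      intro h0
      apply h2'
      have hsub : Esᶜ ∩ ball x r ⊆ (Esᶜ ∩ ball x r ∩ T) ∪ Tᶜ := by
        intro y hy
        by_cases hyT : y ∈ T
        · exact Or.inl ⟨hy, hyT⟩
        · exact Or.inr hyT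
      exact measure_mono_null hsub (by
        refine le_antisymm ?_ zero_le
        calc volume ((Esᶜ ∩ ball x r ∩ T) ∪ Tᶜ) ≤ volume (Esᶜ ∩ ball x r ∩ T) + volume Tᶜ :=
              measure_union_le _ _
          _ = 0 := by rw [h0, hTnull, add_zero])
    obtain ⟨q, hq⟩ := nonempty_of_measure_ne_zero hpos
    refine ⟨q, hq.1.2, fun hqD => ?_⟩
    have h0 := hq.2
    rw [hT, mem_setOf_eq, indicator_of_notMem hq.1.1] at h0
    have h1' : Tendsto (fun ρ => volume (Es ∩ ball q ρ) / volume (ball q ρ)) (𝓝[>] (0:ℝ))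
        (𝓝 1) := hqD
    exact zero_ne_one (tendsto_nhds_unique h0 h1')
  obtain ⟨p, hpB, hpD⟩ := hp
  obtain ⟨q, hqB, hqD⟩ := hq
  have hfr := preconn_inter_frontier (convex_ball x r).isPreconnected
    ⟨p, hpB, hpD⟩ ⟨q, hqB, hqD⟩
  obtain ⟨y, hyB, hyF⟩ := hfr
  exact mem_dilate_iff.2 ⟨y, hyF, hyB⟩


/-- If `E` has null measure in the ball, the ball misses the closure of the density-one set. -/
lemma closure_densityOne_disj {Es : Set Euc} {r : ℝ} {x : Euc}
    (h0 : volume (Es ∩ ball x r) = 0) :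
    ball x r ∩ closure (densityOne Es) = ∅ := by
  rw [eq_empty_iff_forall_notMem]
  rintro z ⟨hzB, hzc⟩
  obtain ⟨p, hpB, hpD⟩ := mem_closure_iff.1 hzc (ball x r) isOpen_ball hzB
  have h12 : ∀ᶠ ρ in 𝓝[>] (0:ℝ),
      (1/2 : ℝ≥0∞) < volume (Es ∩ ball p ρ) / volume (ball p ρ) :=
    hpD.eventually (eventually_gt_nhds (by norm_num))
  have hrp : 0 < r - dist p x := by rw [mem_ball] at hpB; linarith
  have hsmall : Ioo (0:ℝ) (r - dist p x) ∈ 𝓝[>] (0:ℝ) := Ioo_mem_nhdsGT_of_mem ⟨le_rfl, hrp⟩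
  obtain ⟨ρ, hρ1, hρ2⟩ := (h12.and (eventually_of_mem hsmall (fun ρ h => h))).exists
  have hsub : ball p ρ ⊆ ball x r := by
    apply ball_subset_ball'
    linarith [hρ2.2]
  have hz : volume (Es ∩ ball p ρ) = 0 :=
    measure_mono_null (inter_subset_inter_right _ hsub) h0
  rw [hz, ENNReal.zero_div] at hρ1
  simp at hρ1

/-- If the complement of `E` has null measure in the ball, the ball is in the interior of the
density-one set. -/
lemma ball_subset_interior_densityOne {Es : Set Euc} {r : ℝ} {x : Euc}
    (h0 : volume (Esᶜ ∩ ball x r) = 0) :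
    ball x r ⊆ interior (densityOne Es) := by
  refine interior_maximal ?_ isOpen_ball
  intro z hz
  have hε : 0 < r - dist z x := by rw [mem_ball] at hz; linarith
  have heq : (fun _ : ℝ => (1:ℝ≥0∞)) =ᶠ[𝓝[>] (0:ℝ)]
      (fun ρ => volume (Es ∩ ball z ρ) / volume (ball z ρ)) := by
    filter_upwards [Ioo_mem_nhdsGT_of_mem (by exact ⟨le_rfl, hε⟩ : (0:ℝ) ∈ Ico 0 (r - dist z x))]
      with ρ hρ
    have hsub : ball z ρ ⊆ ball x r := by
      apply ball_subset_ball'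
      linarith [hρ.2]
    have hdiff : volume (ball z ρ \ Es) = 0 := by
      refine measure_mono_null ?_ h0
      rintro y ⟨hy1, hy2⟩
      exact ⟨hy2, hsub hy1⟩
    have hfull : volume (Es ∩ ball z ρ) = volume (ball z ρ) := by
      refine le_antisymm (measure_mono inter_subset_right) ?_
      calc volume (ball z ρ) ≤ volume (ball z ρ ∩ Es) + volume (ball z ρ \ Es) :=
            measure_le_inter_add_diff volume _ _
        _ = volume (Es ∩ ball z ρ) := by rw [hdiff, add_zero, inter_comm]
    rw [hfull, ENNReal.div_self (measure_ball_pos volume z hρ.1).ne' measure_ball_lt_top.ne]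
  have : Tendsto (fun _ : ℝ => (1:ℝ≥0∞)) (𝓝[>] (0:ℝ)) (𝓝 1) := tendsto_const_nhds
  exact this.congr' heq

/-- Membership in the dilation of the frontier forces `s` to be between essential inf and sup. -/
lemma bounds_of_mem_dilate {u : Euc → ℝ} {r : ℝ} (hr : 0 < r) {x : Euc} {s : ℝ}
    (hx : x ∈ dilate (frontier (densityOne {y | u y > s})) r) :
    mInf u r x ≤ (s : EReal) ∧ (s : EReal) ≤ Msup u r x := by
  set Es : Set Euc := {y | u y > s} with hEs
  obtain ⟨y, hyF, hyB⟩ := mem_dilate_iff.1 hx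
  constructor
  · by_contra h
    push_neg at h
    -- s < mInf, so a.e. on the ball u > s, complement null
    have hae : ∀ᵐ z ∂(volume.restrict (ball x r)), (s : EReal) < (u z : EReal) :=
      (ae_essInf_le (μ := volume.restrict (ball x r)) (f := fun y => (u y : EReal))).mono
        fun z hz => lt_of_lt_of_le h hz
    have h0 : volume (Esᶜ ∩ ball x r) = 0 := by
      rw [ae_iff] at hae
      rw [Measure.restrict_apply' measurableSet_ball] at hae
      refine measure_mono_null ?_ hae
      rintro z ⟨hz1, hz2⟩
      refine ⟨?_, hz2⟩
      simp only [mem_setOf_eq, not_lt]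
      exact_mod_cast le_of_not_gt fun hlt => hz1 hlt
    have := ball_subset_interior_densityOne h0 hyB
    exact hyF.2 this
  · by_contra h
    push_neg at h
    have hae : ∀ᵐ z ∂(volume.restrict (ball x r)), (u z : EReal) < (s : EReal) :=
      (ae_le_essSup (μ := volume.restrict (ball x r)) (f := fun y => (u y : EReal))).mono
        fun z hz => lt_of_le_of_lt hz h
    have h0 : volume (Es ∩ ball x r) = 0 := by
      rw [ae_iff] at hae
      rw [Measure.restrict_apply' measurableSet_ball] at hae
      refine measure_mono_null ?_ hae
      rintro z ⟨hz1, hz2⟩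
      refine ⟨?_, hz2⟩
      simp only [mem_setOf_eq, not_lt]
      exact_mod_cast le_of_lt hz1
    have hdisj := closure_densityOne_disj h0
    rw [eq_empty_iff_forall_notMem] at hdisj
    exact hdisj y ⟨hyB, hyF.1⟩


lemma erealToENNReal_bot : erealToENNReal ⊥ = 0 := by
  rw [erealToENNReal, if_neg (by simp)]
  simp

lemma erealToENNReal_top : erealToENNReal ⊤ = ⊤ := by
  rw [erealToENNReal, if_pos rfl]

lemma erealToENNReal_coe (c : ℝ) : erealToENNReal (c : EReal) = ENNReal.ofReal c := by
  rw [erealToENNReal, if_neg (by simp)]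
  simp

lemma vol_Ioo_eq {a b : EReal} (hab : a ≤ b) :
    volume {s : ℝ | a < (s : EReal) ∧ (s : EReal) < b} = erealToENNReal (b - a) := by
  induction a using EReal.rec with
  | bot =>
    induction b using EReal.rec with
    | bot =>
      have : {s : ℝ | (⊥:EReal) < (s:EReal) ∧ (s:EReal) < ⊥} = ∅ := by
        ext s; simp
      rw [this, measure_empty, EReal.bot_sub, erealToENNReal_bot]
    | coe c =>
      have : {s : ℝ | (⊥:EReal) < (s:EReal) ∧ (s:EReal) < (c:EReal)} = Iio c := by
        ext s; simp [EReal.bot_lt_coe, EReal.coe_lt_coe_iff]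
      rw [this, Real.volume_Iio, EReal.coe_sub_bot, erealToENNReal_top]
    | top =>
      have : {s : ℝ | (⊥:EReal) < (s:EReal) ∧ (s:EReal) < ⊤} = univ := by
        ext s; simp [EReal.bot_lt_coe, EReal.coe_lt_top]
      rw [this, Real.volume_univ, EReal.top_sub_bot, erealToENNReal_top]
  | coe c =>
    induction b using EReal.rec with
    | bot => exact absurd hab (by simp [EReal.bot_lt_coe])
    | coe d =>
      have hcd : c ≤ d := by exact_mod_cast hab
      have : {s : ℝ | (c:EReal) < (s:EReal) ∧ (s:EReal) < (d:EReal)} = Ioo c d := by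
        ext s; simp [EReal.coe_lt_coe_iff, Ioo]
      rw [this, Real.volume_Ioo, ← EReal.coe_sub, erealToENNReal_coe]
    | top =>
      have : {s : ℝ | (c:EReal) < (s:EReal) ∧ (s:EReal) < ⊤} = Ioi c := by
        ext s; simp [EReal.coe_lt_coe_iff, EReal.coe_lt_top]
      rw [this, Real.volume_Ioi, EReal.top_sub_coe, erealToENNReal_top]
  | top =>
    have hb : b = ⊤ := top_le_iff.1 hab
    subst hb
    have : {s : ℝ | (⊤:EReal) < (s:EReal) ∧ (s:EReal) < ⊤} = ∅ := by
      ext s; simp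
    rw [this, measure_empty, EReal.sub_top ⊤, erealToENNReal_bot]


theorem coarea_core (u : Euc → ℝ) (hu : Measurable u) (Ω : Set Euc) (hΩ : IsOpen Ω)
    (r : ℝ) (hr : 0 < r) :
    ∫⁻ x in Ω, osc u (ball x r) =
      ∫⁻ s : ℝ, volume ((dilate (frontier (densityOne {y | u y > s})) r) ∩ Ω) := by
  have hm : Measurable (mInf u r) := (usc_mInf u hr).measurable
  have hM : Measurable (Msup u r) := (lsc_Msup u hr).measurable
  set G : Set (ℝ × Euc) :=
    {p | p.2 ∈ Ω ∧ mInf u r p.2 < (p.1 : EReal) ∧ (p.1 : EReal) < Msup u r p.2} with hGdef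
  have hGm : MeasurableSet G := by
    have : G = (Prod.snd ⁻¹' Ω) ∩ ({p : ℝ × Euc | mInf u r p.2 < (p.1 : EReal)} ∩
        {p : ℝ × Euc | (p.1 : EReal) < Msup u r p.2}) := by
      ext p; simp [hGdef, and_assoc]
    rw [this]
    exact (hΩ.measurableSet.preimage measurable_snd).inter
      ((measurableSet_lt (hm.comp measurable_snd)
        (measurable_coe_real_ereal.comp measurable_fst)).inter
      (measurableSet_lt (measurable_coe_real_ereal.comp measurable_fst)
        (hM.comp measurable_snd)))
  set Z : Set (ℝ × Euc) :=
    {p | p.2 ∈ Ω ∧ (mInf u r p.2 = (p.1 : EReal) ∨ Msup u r p.2 = (p.1 : EReal))} with hZdef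
  have hZm : MeasurableSet Z := by
    have he1 : MeasurableSet {p : ℝ × Euc | mInf u r p.2 = (p.1 : EReal)} := by
      have : {p : ℝ × Euc | mInf u r p.2 = (p.1 : EReal)} =
          {p : ℝ × Euc | mInf u r p.2 ≤ (p.1 : EReal)} ∩
          {p : ℝ × Euc | (p.1 : EReal) ≤ mInf u r p.2} := by
        ext p; simp [le_antisymm_iff]
      rw [this]
      exact (measurableSet_le (hm.comp measurable_snd)
        (measurable_coe_real_ereal.comp measurable_fst)).inter
        (measurableSet_le (measurable_coe_real_ereal.comp measurable_fst)
          (hm.comp measurable_snd))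
    have he2 : MeasurableSet {p : ℝ × Euc | Msup u r p.2 = (p.1 : EReal)} := by
      have : {p : ℝ × Euc | Msup u r p.2 = (p.1 : EReal)} =
          {p : ℝ × Euc | Msup u r p.2 ≤ (p.1 : EReal)} ∩
          {p : ℝ × Euc | (p.1 : EReal) ≤ Msup u r p.2} := by
        ext p; simp [le_antisymm_iff]
      rw [this]
      exact (measurableSet_le (hM.comp measurable_snd)
        (measurable_coe_real_ereal.comp measurable_fst)).inter
        (measurableSet_le (measurable_coe_real_ereal.comp measurable_fst)
          (hM.comp measurable_snd))
    have : Z = (Prod.snd ⁻¹' Ω) ∩ ({p : ℝ × Euc | mInf u r p.2 = (p.1 : EReal)} ∪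
        {p : ℝ × Euc | Msup u r p.2 = (p.1 : EReal)}) := by
      ext p; simp [hZdef]
    rw [this]
    exact (hΩ.measurableSet.preimage measurable_snd).inter (he1.union he2)
  set I : ℝ≥0∞ := ∫⁻ s : ℝ,
    volume {x : Euc | x ∈ Ω ∧ mInf u r x < (s : EReal) ∧ (s : EReal) < Msup u r x} with hIdef
  have hG1 : I = (volume.prod volume) G := by
    rw [Measure.prod_apply hGm]
    rfl
  have hG2 : (volume.prod volume) G =
      ∫⁻ x in Ω, volume {s : ℝ | mInf u r x < (s : EReal) ∧ (s : EReal) < Msup u r x} := by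
    rw [Measure.prod_apply_symm hGm]
    have hsec : ∀ x : Euc, volume ((fun s : ℝ => (s, x)) ⁻¹' G) =
        Ω.indicator (fun x => volume {s : ℝ | mInf u r x < (s : EReal) ∧
          (s : EReal) < Msup u r x}) x := by
      intro x
      by_cases hx : x ∈ Ω
      · rw [indicator_of_mem hx]
        congr 1
        ext s
        simp [hGdef, hx]
      · rw [indicator_of_notMem hx]
        have : ((fun s : ℝ => (s, x)) ⁻¹' G) = ∅ := by
          ext s; simp [hGdef, hx]
        rw [this, measure_empty]
    rw [lintegral_congr hsec, lintegral_indicator hΩ.measurableSet _]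
  have hZ0 : (∫⁻ s : ℝ,
      volume {x : Euc | x ∈ Ω ∧ (mInf u r x = (s : EReal) ∨ Msup u r x = (s : EReal))}) = 0 := by
    have h1 : (∫⁻ s : ℝ,
        volume {x : Euc | x ∈ Ω ∧ (mInf u r x = (s : EReal) ∨ Msup u r x = (s : EReal))}) =
        (volume.prod volume) Z := by
      rw [Measure.prod_apply hZm]
      rfl
    rw [h1, Measure.prod_apply_symm hZm]
    have hsec : ∀ x : Euc, volume ((fun s : ℝ => (s, x)) ⁻¹' Z) = 0 := by
      intro x
      have hsub : ((fun s : ℝ => (s, x)) ⁻¹' Z) ⊆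
          {s : ℝ | mInf u r x = (s : EReal)} ∪ {s : ℝ | Msup u r x = (s : EReal)} :=
        fun s hs => hs.2
      refine measure_mono_null hsub ?_
      have e1 : ({s : ℝ | mInf u r x = (s : EReal)}).Subsingleton := by
        intro s1 h1 s2 h2
        have : (s1 : EReal) = (s2 : EReal) := h1.symm.trans h2
        exact_mod_cast this
      have e2 : ({s : ℝ | Msup u r x = (s : EReal)}).Subsingleton := by
        intro s1 h1 s2 h2
        have : (s1 : EReal) = (s2 : EReal) := h1.symm.trans h2
        exact_mod_cast this
      refine le_antisymm ((measure_union_le _ _).trans ?_) zero_le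
      rw [e1.measure_zero volume, e2.measure_zero volume, add_zero]
    rw [lintegral_congr hsec]
    simp
  have hle1 : I ≤ ∫⁻ s : ℝ,
      volume ((dilate (frontier (densityOne {y | u y > s})) r) ∩ Ω) := by
    refine lintegral_mono fun s => measure_mono ?_
    rintro x ⟨hxΩ, hlo, hhi⟩
    exact ⟨mem_dilate_of_pos hu hr (lt_Msup_iff.1 hhi) (mInf_lt_iff.1 hlo), hxΩ⟩
  have hle2 : (∫⁻ s : ℝ,
      volume ((dilate (frontier (densityOne {y | u y > s})) r) ∩ Ω)) ≤ I := by
    have step : ∀ s : ℝ, volume ((dilate (frontier (densityOne {y | u y > s})) r) ∩ Ω) ≤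
        volume {x : Euc | x ∈ Ω ∧ mInf u r x < (s : EReal) ∧ (s : EReal) < Msup u r x} +
        volume {x : Euc | x ∈ Ω ∧ (mInf u r x = (s : EReal) ∨ Msup u r x = (s : EReal))} := by
      intro s
      refine (measure_mono ?_).trans (measure_union_le _ _)
      rintro x ⟨hxd, hxΩ⟩
      obtain ⟨hlo, hhi⟩ := bounds_of_mem_dilate hr hxd
      rcases lt_or_eq_of_le hlo with h1 | h1
      · rcases lt_or_eq_of_le hhi with h2 | h2
        · exact Or.inl ⟨hxΩ, h1, h2⟩
        · exact Or.inr ⟨hxΩ, Or.inr h2.symm⟩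
      · exact Or.inr ⟨hxΩ, Or.inl h1⟩
    calc (∫⁻ s : ℝ, volume ((dilate (frontier (densityOne {y | u y > s})) r) ∩ Ω))
        ≤ ∫⁻ s : ℝ,
          (volume {x : Euc | x ∈ Ω ∧ mInf u r x < (s : EReal) ∧ (s : EReal) < Msup u r x} +
           volume {x : Euc | x ∈ Ω ∧ (mInf u r x = (s : EReal) ∨ Msup u r x = (s : EReal))}) :=
          lintegral_mono step
      _ = I + ∫⁻ s : ℝ,
          volume {x : Euc | x ∈ Ω ∧ (mInf u r x = (s : EReal) ∨ Msup u r x = (s : EReal))} := by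
          rw [hIdef]
          exact lintegral_add_left (measurable_measure_prodMk_left hGm) _
      _ = I := by rw [hZ0, add_zero]
  have hR : (∫⁻ s : ℝ,
      volume ((dilate (frontier (densityOne {y | u y > s})) r) ∩ Ω)) = I :=
    le_antisymm hle2 hle1
  have hL : (∫⁻ x in Ω, osc u (ball x r)) =
      ∫⁻ x in Ω, volume {s : ℝ | mInf u r x < (s : EReal) ∧ (s : EReal) < Msup u r x} := by
    refine lintegral_congr fun x => ?_
    rw [osc_eq, ← vol_Ioo_eq (mInf_le_Msup u hr x)]
  rw [hL, hR, hG1, hG2]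

end Aux

lemma densityOne_congr {n : ℕ} {S T : Set (EuclideanSpace ℝ (Fin n))} (h : S =ᵐ[volume] T) :
    densityOne S = densityOne T := by
  have hρ : ∀ (x : EuclideanSpace ℝ (Fin n)) (ρ : ℝ),
      volume (S ∩ ball x ρ) = volume (T ∩ ball x ρ) := by
    intro x ρ
    exact measure_congr (h.inter EventuallyEq.rfl)
  ext x
  simp only [densityOne, mem_setOf_eq]
  have heq : (fun ρ => volume (S ∩ ball x ρ) / volume (ball x ρ)) =
      fun ρ => volume (T ∩ ball x ρ) / volume (ball x ρ) :=
    funext fun ρ => by rw [hρ x ρ]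
  rw [heq]

/-- generalized coarea formula. -/
theorem coarea_osc {n : ℕ} (u : EuclideanSpace ℝ (Fin n) → ℝ) (hu : LocallyIntegrable u)
    (Ω : Set (EuclideanSpace ℝ (Fin n))) (hΩ : IsOpen Ω) (r : ℝ) (hr : 0 < r) :
    ∫⁻ x in Ω, osc u (ball x r) =
      ∫⁻ s : ℝ, volume ((dilate (frontier (densityOne {y | u y > s})) r) ∩ Ω) := by
  have hae := hu.aestronglyMeasurable
  set v := hae.mk u with hv
  have hvm : Measurable v := hae.stronglyMeasurable_mk.measurable
  have huv : u =ᵐ[volume] v := hae.ae_eq_mk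
  have hL : (∫⁻ x in Ω, osc u (ball x r)) = ∫⁻ x in Ω, osc v (ball x r) := by
    refine lintegral_congr fun x => ?_
    unfold osc
    have h1 : (fun y => (u y : EReal)) =ᵐ[volume.restrict (ball x r)]
        (fun y => (v y : EReal)) :=
      ae_restrict_of_ae (huv.mono fun y hy => by simp only []; rw [hy])
    rw [essSup_congr_ae h1, essInf_congr_ae h1]
  have hR : ∀ s : ℝ, densityOne {y | u y > s} = densityOne {y | v y > s} := by
    intro s
    refine densityOne_congr (huv.mono fun y hy => ?_)
    show (y ∈ {y | u y > s}) = (y ∈ {y | v y > s})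
    simp [hy]
  rw [hL, coarea_core v hvm Ω hΩ r hr]
  exact lintegral_congr fun s => by rw [hR s]
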